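/- Every parallel of a surface of osculating circles is a line of curvature: if γ(u) = X(s₀, u/r(s₀)) is a parallel parametrized by arc length, then (d/du)𝐍(γ(u)) = -(τ/√(r²τ² + r'²)) γ'(u), where all functions of s are evaluated at s₀. In particular the normal curvature along a parallel is the constant τ/√(r²τ² + r'²). -/

import Mathlib

open Real

noncomputable section

/-- Euclidean dot product on ℝ³. -/
def dot3 (a b : Fin 3 → ℝ) : ℝ := a 0 * b 0 + a 1 * b 1 + a 2 * b 2

/-- Cross product on ℝ³. -/
def cross3 (a b : Fin 3 → ℝ) : Fin 3 → ℝ :=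
  ![a 1 * b 2 - a 2 * b 1, a 2 * b 0 - a 0 * b 2, a 0 * b 1 - a 1 * b 0]

/-- Euclidean norm on ℝ³. -/
def norm3 (a : Fin 3 → ℝ) : ℝ := Real.sqrt (dot3 a a)

/-- Scalar triple product: determinant of the three vectors. -/
def det3 (a b c : Fin 3 → ℝ) : ℝ := dot3 a (cross3 b c)

/-- Parallels are lines of curvature: along the arc-length parametrized
parallel `γ(u) = X(s₀, u/r(s₀))` the derivative of the surface unit normal is
`-(τ/√(r²τ²+r'²)) γ'(u)`; in particular the normal curvature is the constant
`τ/√(r²τ²+r'²)` along the parallel. -/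
theorem stmt_6
    (α T N B : ℝ → Fin 3 → ℝ) (κ τ r r' : ℝ → ℝ)
    (hκ : ∀ s, 0 < κ s)
    (hr : ∀ s, r s = (κ s)⁻¹)
    -- Frenet frame and Frenet equations
    (hTT : ∀ s, dot3 (T s) (T s) = 1)
    (hNN : ∀ s, dot3 (N s) (N s) = 1)
    (hTN : ∀ s, dot3 (T s) (N s) = 0)
    (hB : ∀ s, B s = cross3 (T s) (N s))
    (hα : ∀ s, HasDerivAt α (T s) s)
    (hT : ∀ s, HasDerivAt T (κ s • N s) s)
    (hN : ∀ s, HasDerivAt N ((-κ s) • T s + τ s • B s) s)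
    (hB' : ∀ s, HasDerivAt B ((-τ s) • N s) s)
    (hr' : ∀ s, HasDerivAt r (r' s) s)
    -- the surface of osculating circles and its partial derivatives
    (X Xs Xu : ℝ → ℝ → Fin 3 → ℝ)
    (hX : ∀ s u, X s u = α s + r s • (Real.sin u • T s + (1 - Real.cos u) • N s))
    (hXs : ∀ s u, HasDerivAt (fun t => X t u) (Xs s u) s)
    (hXu : ∀ s u, HasDerivAt (fun w => X s w) (Xu s u) u)
    (s₀ : ℝ) (hreg : ¬(r' s₀ = 0 ∧ τ s₀ = 0))
    (γ γd 𝒩 : ℝ → Fin 3 → ℝ)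
    (hγ : ∀ u, γ u = X s₀ (u / r s₀))
    (hγd : ∀ u, HasDerivAt γ (γd u) u)
    -- the surface unit normal along the parallel
    (h𝒩 : ∀ u, 𝒩 u =
      (Real.sqrt ((r s₀) ^ 2 * (τ s₀) ^ 2 + (r' s₀) ^ 2))⁻¹ •
        ((-(r s₀ * τ s₀ * Real.sin (u / r s₀))) • T s₀
          + (r s₀ * τ s₀ * Real.cos (u / r s₀)) • N s₀ + r' s₀ • B s₀)) :
    ∀ u,
      HasDerivAt 𝒩
        ((-(τ s₀ / Real.sqrt ((r s₀) ^ 2 * (τ s₀) ^ 2 + (r' s₀) ^ 2))) • γd u) u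
      ∧ -dot3 ((-(τ s₀ / Real.sqrt ((r s₀) ^ 2 * (τ s₀) ^ 2 + (r' s₀) ^ 2))) • γd u)
            (γd u)
          = τ s₀ / Real.sqrt ((r s₀) ^ 2 * (τ s₀) ^ 2 + (r' s₀) ^ 2) := by

  intro u
  set r0 := r s₀ with hr0def
  set τ0 := τ s₀ with hτ0def
  set c := Real.sqrt ((r s₀) ^ 2 * (τ s₀) ^ 2 + (r' s₀) ^ 2) with hcdef
  have hr0pos : 0 < r0 := by rw [hr0def, hr s₀]; exact inv_pos.mpr (hκ s₀)
  have hr0ne : r0 ≠ 0 := ne_of_gt hr0pos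
  have hcpos : 0 < c := by
    rw [hcdef]
    apply Real.sqrt_pos.mpr
    rcases not_and_or.mp hreg with h | h
    · have : 0 < (r' s₀) ^ 2 := by positivity
      nlinarith [sq_nonneg (r s₀ * τ s₀)]
    · have hrne : r s₀ ≠ 0 := hr0ne
      have : 0 < (r s₀) ^ 2 * (τ s₀) ^ 2 := by positivity
      nlinarith [sq_nonneg (r' s₀)]
  have hcne : c ≠ 0 := ne_of_gt hcpos
  set w := u / r0 with hwdef
  -- derivative of u ↦ u / r0
  have hin : HasDerivAt (fun v : ℝ => v / r0) (1 / r0) u := (hasDerivAt_id u).div_const r0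
  -- Xu formula
  have hXuF : HasDerivAt (fun v => X s₀ v)
      (r0 • (Real.cos w • T s₀ + Real.sin w • N s₀)) w := by
    have h1 : (fun v => X s₀ v)
        = fun v => α s₀ + r0 • (Real.sin v • T s₀ + (1 - Real.cos v) • N s₀) :=
      funext fun v => hX s₀ v
    rw [h1]
    have hsin : HasDerivAt (fun v : ℝ => Real.sin v • T s₀) (Real.cos w • T s₀) w :=
      (Real.hasDerivAt_sin w).smul_const (T s₀)
    have hcos : HasDerivAt (fun v : ℝ => (1 - Real.cos v) • N s₀)
        ((0 - -Real.sin w) • N s₀) w :=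
      ((hasDerivAt_const w (1:ℝ)).sub (Real.hasDerivAt_cos w)).smul_const (N s₀)
    have := ((hsin.add hcos).const_smul r0).const_add (α s₀)
    rw [zero_sub, neg_neg] at this
    exact this
  have hXueq : Xu s₀ w = r0 • (Real.cos w • T s₀ + Real.sin w • N s₀) :=
    (hXu s₀ w).unique hXuF
  -- γd formula
  have hγcomp : γ = (fun v => X s₀ v) ∘ (fun v : ℝ => v / r0) := funext fun v => hγ v
  have hγd2 : HasDerivAt γ ((1 / r0) • Xu s₀ w) u := by
    rw [hγcomp]
    exact (hXu s₀ w).scomp u hin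
  have hγdeq : γd u = Real.cos w • T s₀ + Real.sin w • N s₀ := by
    rw [(hγd u).unique hγd2, hXueq, smul_smul, one_div, inv_mul_cancel₀ hr0ne, one_smul]
  -- derivative of the normal
  have hF : HasDerivAt (fun v => c⁻¹ •
      ((-(r0 * τ0 * Real.sin v)) • T s₀ + (r0 * τ0 * Real.cos v) • N s₀ + r' s₀ • B s₀))
      (c⁻¹ • (((-(r0 * τ0 * Real.cos w)) • T s₀ + (r0 * τ0 * -Real.sin w) • N s₀) + 0)) w := by
    have h1 : HasDerivAt (fun v : ℝ => (-(r0 * τ0 * Real.sin v)) • T s₀)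
        ((-(r0 * τ0 * Real.cos w)) • T s₀) w :=
      (((Real.hasDerivAt_sin w).const_mul (r0 * τ0)).neg).smul_const (T s₀)
    have h2 : HasDerivAt (fun v : ℝ => (r0 * τ0 * Real.cos v) • N s₀)
        ((r0 * τ0 * -Real.sin w) • N s₀) w :=
      ((Real.hasDerivAt_cos w).const_mul (r0 * τ0)).smul_const (N s₀)
    exact ((h1.add h2).add (hasDerivAt_const w (r' s₀ • B s₀))).const_smul c⁻¹
  have h𝒩comp : 𝒩 = (fun v => c⁻¹ •
      ((-(r0 * τ0 * Real.sin v)) • T s₀ + (r0 * τ0 * Real.cos v) • N s₀ + r' s₀ • B s₀))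
      ∘ (fun v : ℝ => v / r0) := funext fun v => h𝒩 v
  have h𝒩d : HasDerivAt 𝒩 ((1 / r0) •
      (c⁻¹ • (((-(r0 * τ0 * Real.cos w)) • T s₀ + (r0 * τ0 * -Real.sin w) • N s₀) + 0))) u := by
    rw [h𝒩comp]
    exact hF.scomp u hin
  constructor
  · convert h𝒩d using 1
    rw [hγdeq]
    funext i
    simp only [Pi.smul_apply, Pi.add_apply, Pi.zero_apply, smul_eq_mul, Pi.neg_apply]
    field_simp
    ring
  · have hdot : dot3 (γd u) (γd u) = 1 := by
      have e1 := hTT s₀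
      have e2 := hNN s₀
      have e3 := hTN s₀
      have e4 := Real.sin_sq_add_cos_sq w
      simp only [dot3] at e1 e2 e3 ⊢
      rw [hγdeq]
      simp only [Pi.add_apply, Pi.smul_apply, smul_eq_mul]
      linear_combination Real.cos w ^ 2 * e1 + Real.sin w ^ 2 * e2 + 2 * Real.sin w * Real.cos w * e3 + e4
    have e1 := hTT s₀
    simp only [dot3] at hdot ⊢
    simp only [Pi.smul_apply, smul_eq_mul]
    linear_combination (τ0 / c) * hdot
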